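/- Let p ∈ ℝ[x_1,…,x_d] be an RZ_{x⁰} polynomial of degree 2 with p(x⁰) = 1. Then there exist a positive integer r and real symmetric matrices A_0, A_1, …, A_d of size n = 2r with A_0 + x⁰_1 A_1 + ⋯ + x⁰_d A_d = I_n such that det(A_0 + x_1 A_1 + ⋯ + x_d A_d) = p(x)^r as polynomials in x_1,…,x_d. -/

import Mathlib

/-- A polynomial `p ∈ ℝ[x_1,…,x_d]` satisfies the real zero condition with respect to
`x⁰ ∈ ℝ^d` if for every `x ∈ ℝ^d`, every complex zero of the univariate polynomial
`t ↦ p(x⁰ + t·x)` is real. -/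
def IsRZ {d : ℕ} (p : MvPolynomial (Fin d) ℝ) (x0 : Fin d → ℝ) : Prop :=
  ∀ x : Fin d → ℝ, ∀ t : ℂ,
    MvPolynomial.aeval (fun i => (x0 i : ℂ) + t * (x i : ℂ)) p = 0 → t.im = 0

open MvPolynomial Matrix
open scoped Kronecker

section Aux


private lemma sum_single_lin {d : ℕ} (i : Fin d) (r : ℝ) :
    ∑ j, (C ((Pi.single i r : Fin d → ℝ) j) : MvPolynomial (Fin d) ℝ) * X j = C r * X i := by
  classical
  simp only [Pi.single_apply, apply_ite C, map_zero, ite_mul, zero_mul]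
  simp

private lemma sum_std_quad {d : ℕ} (i0 j0 : Fin d) (r : ℝ) :
    ∑ a, ∑ b, (C (Matrix.single i0 j0 r a b) : MvPolynomial (Fin d) ℝ) * (X a * X b)
      = C r * (X i0 * X j0) := by
  classical
  simp only [Matrix.single, Matrix.of_apply, ite_and, apply_ite C, map_zero, ite_mul,
    zero_mul]
  simp

private lemma rep_monomial {d : ℕ} (s : Fin d →₀ ℕ) (hs : (s.sum fun _ n => n) ≤ 2) (r : ℝ) :
    ∃ (c : ℝ) (b : Fin d → ℝ) (G : Matrix (Fin d) (Fin d) ℝ),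
      (monomial s r : MvPolynomial (Fin d) ℝ)
        = C c + ∑ i, C (b i) * X i + ∑ i, ∑ j, C (G i j) * (X i * X j) := by
  classical
  have hsum : (s.sum fun _ n => n) = ∑ a ∈ s.support, s a := rfl
  have hcard : s.support.card ≤ s.sum fun _ n => n := by
    rw [hsum]
    calc s.support.card = ∑ a ∈ s.support, 1 := by simp
    _ ≤ ∑ a ∈ s.support, s a := Finset.sum_le_sum fun a ha => by
        have := Finsupp.mem_support_iff.1 ha; omega
  have hub : s.support.card ≤ 2 := le_trans hcard hs
  interval_cases hc : s.support.card
  · have h0 : s = 0 := Finsupp.support_eq_empty.1 (Finset.card_eq_zero.1 hc)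
    refine ⟨r, 0, 0, ?_⟩
    simp [h0]
  · obtain ⟨i, hi⟩ := Finset.card_eq_one.1 hc
    have hsi : s = Finsupp.single i (s i) := by
      ext a
      rcases eq_or_ne a i with rfl | h
      · simp
      · have : a ∉ s.support := by rw [hi]; simp [h]
        simp [Finsupp.single_apply, Ne.symm h, Finsupp.notMem_support_iff.1 this]
    have h1 : 1 ≤ s i := by
      have : i ∈ s.support := by rw [hi]; exact Finset.mem_singleton_self i
      have := Finsupp.mem_support_iff.1 this; omega
    have h2 : s i ≤ 2 := by
      have := hs; rw [hsum, hi, Finset.sum_singleton] at this; exact this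
    interval_cases hn : s i
    · refine ⟨0, Pi.single i r, 0, ?_⟩
      rw [hsi, show (monomial (Finsupp.single i 1) r : MvPolynomial (Fin d) ℝ) = C r * X i
        from C_mul_X_eq_monomial.symm, sum_single_lin]
      simp
    · refine ⟨0, 0, Matrix.single i i r, ?_⟩
      rw [hsi, show (monomial (Finsupp.single i 2) r : MvPolynomial (Fin d) ℝ)
          = C r * (X i * X i) from by rw [← C_mul_X_pow_eq_monomial, pow_two],
        sum_std_quad]
      simp
  · obtain ⟨i, j, hij, hsup⟩ := Finset.card_eq_two.1 hc
    have hsumij : s i + s j = s.sum fun _ n => n := by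
      rw [hsum, hsup, Finset.sum_pair hij]
    have hi1 : 1 ≤ s i := by
      have : i ∈ s.support := by rw [hsup]; simp
      have := Finsupp.mem_support_iff.1 this; omega
    have hj1 : 1 ≤ s j := by
      have : j ∈ s.support := by rw [hsup]; simp
      have := Finsupp.mem_support_iff.1 this; omega
    have hsi : s i = 1 := by omega
    have hsj : s j = 1 := by omega
    have hseq : s = Finsupp.single i 1 + Finsupp.single j 1 := by
      ext a
      rcases eq_or_ne a i with rfl | hai
      · simp [Finsupp.single_apply, Ne.symm hij, hsi]
      rcases eq_or_ne a j with rfl | haj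
      · simp [Finsupp.single_apply, hij, Ne.symm hai, hsj]
      · have : a ∉ s.support := by rw [hsup]; simp [hai, haj]
        simp [Finsupp.single_apply, Ne.symm hai, Ne.symm haj,
          Finsupp.notMem_support_iff.1 this]
    refine ⟨0, 0, Matrix.single i j r, ?_⟩
    rw [hseq]
    have hm : (C r : MvPolynomial (Fin d) ℝ) * (X i * X j)
        = monomial (Finsupp.single i 1 + Finsupp.single j 1) r := by
      rw [← mul_assoc, C_mul_X_eq_monomial,
        show (X j : MvPolynomial (Fin d) ℝ) = monomial (Finsupp.single j 1) 1 from
          by rw [← C_mul_X_eq_monomial, _root_.map_one, one_mul],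
        monomial_mul, mul_one]
    rw [← hm, sum_std_quad]
    simp

private lemma rep_of_deg2 {d : ℕ} (p : MvPolynomial (Fin d) ℝ) (h : p.totalDegree ≤ 2) :
    ∃ (c : ℝ) (b : Fin d → ℝ) (G : Matrix (Fin d) (Fin d) ℝ), G.IsSymm ∧
      p = C c + ∑ i, C (b i) * X i + ∑ i, ∑ j, C (G i j) * (X i * X j) := by
  classical
  have main0 : ∃ (c : ℝ) (b : Fin d → ℝ) (G : Matrix (Fin d) (Fin d) ℝ),
      (∑ v ∈ p.support, (monomial v (coeff v p) : MvPolynomial (Fin d) ℝ))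
        = C c + ∑ i, C (b i) * X i + ∑ i, ∑ j, C (G i j) * (X i * X j) := by
    refine Finset.sum_induction _ (fun q => ∃ (c : ℝ) (b : Fin d → ℝ)
        (G : Matrix (Fin d) (Fin d) ℝ),
        q = C c + ∑ i, C (b i) * X i + ∑ i, ∑ j, C (G i j) * (X i * X j)) ?_ ?_ ?_
    · rintro q1 q2 ⟨c1, b1, G1, h1⟩ ⟨c2, b2, G2, h2⟩
      refine ⟨c1 + c2, b1 + b2, G1 + G2, ?_⟩
      rw [h1, h2]
      simp only [map_add, add_mul, Finset.sum_add_distrib, Pi.add_apply, Matrix.add_apply]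
      abel
    · exact ⟨0, 0, 0, by simp⟩
    · exact fun v hv => rep_monomial v (le_trans (le_totalDegree hv) h) _
  obtain ⟨c, b, G, hG0⟩ := main0
  have hG : p = C c + ∑ i, C (b i) * X i + ∑ i, ∑ j, C (G i j) * (X i * X j) := by
    conv_lhs => rw [p.as_sum]
    exact hG0
  refine ⟨c, b, Matrix.of fun i j => (G i j + G j i) / 2, ?_, ?_⟩
  · ext i j
    simp [Matrix.transpose_apply, Matrix.IsSymm]
    ring
  · rw [hG]
    congr 1
    have swap : ∑ j, ∑ i, (C (G i j) : MvPolynomial (Fin d) ℝ) * (X j * X i)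
        = ∑ i, ∑ j, (C (G i j) : MvPolynomial (Fin d) ℝ) * (X i * X j) := by
      rw [Finset.sum_comm]
      refine Finset.sum_congr rfl fun i _ => Finset.sum_congr rfl fun j _ => ?_
      rw [mul_comm (X j) (X i)]
    symm
    calc ∑ i, ∑ j, (C (Matrix.of (fun i j => (G i j + G j i) / 2) i j)
            : MvPolynomial (Fin d) ℝ) * (X i * X j)
        = ∑ i, ∑ j, ((C (1/2 : ℝ) : MvPolynomial (Fin d) ℝ) * (C (G i j) * (X i * X j))
            + C (1/2 : ℝ) * (C (G j i) * (X i * X j))) := by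
          refine Finset.sum_congr rfl fun i _ => Finset.sum_congr rfl fun j _ => ?_
          rw [Matrix.of_apply, show ((G i j + G j i)/2 : ℝ)
            = 1/2 * G i j + 1/2 * G j i from by ring, _root_.map_add, _root_.map_mul, _root_.map_mul]
          ring
      _ = C (1/2 : ℝ) * (∑ i, ∑ j, (C (G i j) : MvPolynomial (Fin d) ℝ) * (X i * X j))
            + C (1/2 : ℝ) * (∑ j, ∑ i, (C (G i j) : MvPolynomial (Fin d) ℝ) * (X j * X i)) := by
          simp only [Finset.sum_add_distrib, Finset.mul_sum]
      _ = ∑ i, ∑ j, (C (G i j) : MvPolynomial (Fin d) ℝ) * (X i * X j) := by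
          rw [swap, ← add_mul, ← map_add]
          norm_num


private def pauliX : Matrix (Fin 2) (Fin 2) ℝ := !![0, 1; 1, 0]
private def pauliZ : Matrix (Fin 2) (Fin 2) ℝ := !![1, 0; 0, -1]

private lemma pauliX_mul_pauliX : pauliX * pauliX = 1 := by
  ext i j
  fin_cases i <;> fin_cases j <;>
    simp [pauliX, Matrix.mul_apply, Fin.sum_univ_two, Matrix.one_apply]

private lemma pauliZ_mul_pauliZ : pauliZ * pauliZ = 1 := by
  ext i j
  fin_cases i <;> fin_cases j <;>
    simp [pauliZ, Matrix.mul_apply, Fin.sum_univ_two, Matrix.one_apply]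

private lemma pauliX_mul_pauliZ : pauliX * pauliZ + pauliZ * pauliX = 0 := by
  ext i j
  fin_cases i <;> fin_cases j <;>
    simp [pauliX, pauliZ, Matrix.mul_apply, Fin.sum_univ_two]

private lemma pauliX_symm : pauliX.IsSymm := by
  ext i j; fin_cases i <;> fin_cases j <;> simp [pauliX]

private lemma pauliZ_symm : pauliZ.IsSymm := by
  ext i j; fin_cases i <;> fin_cases j <;> simp [pauliZ]

private lemma cliff (k : ℕ) :
    ∃ (N : Type) (_ : Fintype N) (_ : DecidableEq N),
      Fintype.card N = 2 ^ k ∧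
      ∃ E : Fin k → Matrix N N ℝ,
        (∀ j, (E j).IsSymm) ∧ (∀ j, E j * E j = 1) ∧
        (∀ j l, j ≠ l → E j * E l + E l * E j = 0) := by
  induction k with
  | zero =>
    exact ⟨Fin 1, inferInstance, inferInstance, by simp, Fin.elim0,
      fun j => j.elim0, fun j => j.elim0, fun j => j.elim0⟩
  | succ k ih =>
    obtain ⟨N, hF, hD, hcard, E, hsymm, hsq, hanti⟩ := ih
    refine ⟨Fin 2 × N, inferInstance, inferInstance, ?_, ?_⟩
    · simp [hcard, pow_succ]; ring
    refine ⟨Fin.lastCases (pauliX ⊗ₖ (1 : Matrix N N ℝ)) (fun j => pauliZ ⊗ₖ E j), ?_, ?_, ?_⟩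
    · intro j
      refine Fin.lastCases ?_ (fun j => ?_) j
      · simp only [Fin.lastCases_last]
        unfold Matrix.IsSymm
        rw [← Matrix.kroneckerMap_transpose, pauliX_symm, Matrix.transpose_one]
      · simp only [Fin.lastCases_castSucc]
        unfold Matrix.IsSymm
        rw [← Matrix.kroneckerMap_transpose, pauliZ_symm, (hsymm j)]
    · intro j
      refine Fin.lastCases ?_ (fun j => ?_) j
      · simp only [Fin.lastCases_last]
        rw [← Matrix.mul_kronecker_mul, pauliX_mul_pauliX, Matrix.one_mul,
          Matrix.one_kronecker_one]
      · simp only [Fin.lastCases_castSucc]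
        rw [← Matrix.mul_kronecker_mul, pauliZ_mul_pauliZ, hsq j, Matrix.one_kronecker_one]
    · intro j l
      refine Fin.lastCases ?_ (fun j' => ?_) j
      · -- j = last, so l = castSucc l'
        refine Fin.lastCases ?_ (fun l' => ?_) l
        · intro h; exact absurd rfl h
        · intro _
          simp only [Fin.lastCases_last, Fin.lastCases_castSucc]
          rw [← Matrix.mul_kronecker_mul, ← Matrix.mul_kronecker_mul, Matrix.one_mul,
            Matrix.mul_one, ← Matrix.add_kronecker, pauliX_mul_pauliZ, Matrix.zero_kronecker]
      · refine Fin.lastCases ?_ (fun l' => ?_) l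
        · intro _
          simp only [Fin.lastCases_last, Fin.lastCases_castSucc]
          rw [← Matrix.mul_kronecker_mul, ← Matrix.mul_kronecker_mul, Matrix.one_mul,
            Matrix.mul_one, ← Matrix.add_kronecker]
          rw [show pauliZ * pauliX + pauliX * pauliZ = 0 from by
            rw [add_comm]; exact pauliX_mul_pauliZ, Matrix.zero_kronecker]
        · intro hne
          have hne' : j' ≠ l' := by
            intro h; exact hne (by rw [h])
          simp only [Fin.lastCases_castSucc]
          rw [← Matrix.mul_kronecker_mul, ← Matrix.mul_kronecker_mul, pauliZ_mul_pauliZ,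
            ← Matrix.kronecker_add, hanti j' l' hne', Matrix.kronecker_zero]

open scoped MatrixOrder in
private lemma sos_rep {d : ℕ} (p : MvPolynomial (Fin d) ℝ) (x0 : Fin d → ℝ)
    (hdeg : p.totalDegree = 2) (hRZ : IsRZ p x0)
    (hval : MvPolynomial.eval x0 p = 1) :
    ∃ (l : Fin d → ℝ) (Bm : Matrix (Fin d) (Fin d) ℝ),
      ∀ x : Fin d → ℝ, eval x p
        = (1 + (∑ i, l i * (x i - x0 i)) / 2)^2 - ∑ k, (∑ i, Bm k i * (x i - x0 i))^2 := by
  classical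
  obtain ⟨c, b, G, hGsymm, hp⟩ := rep_of_deg2 p (le_of_eq hdeg)
  have hGs : ∀ i j, G j i = G i j := fun i j => by
    conv_lhs => rw [← hGsymm]
    rfl
  -- real evaluation
  have E1 : ∀ y : Fin d → ℝ, eval y p
      = c + ∑ i, b i * y i + ∑ i, ∑ j, G i j * (y i * y j) := by
    intro y
    rw [hp]
    simp [eval_C, eval_X, map_sum]
  -- complex evaluation
  have E2 : ∀ z : Fin d → ℂ, aeval z p
      = (c : ℂ) + ∑ i, (b i : ℂ) * z i + ∑ i, ∑ j, (G i j : ℂ) * (z i * z j) := by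
    intro z
    rw [hp]
    simp [map_sum, aeval_X]
  set l : Fin d → ℝ := fun i => b i + 2 * ∑ j, G i j * x0 j with hl
  -- the key quadratic-in-t identity over ℂ
  have K : ∀ (y : Fin d → ℝ) (t : ℂ),
      aeval (fun i => (x0 i : ℂ) + t * (y i : ℂ)) p
        = 1 + t * ((∑ i, l i * y i : ℝ) : ℂ)
          + t^2 * ((∑ i, ∑ j, G i j * (y i * y j) : ℝ) : ℂ) := by
    intro y t
    rw [E2]
    have hconst : c + ∑ i, b i * x0 i + ∑ i, ∑ j, G i j * (x0 i * x0 j) = 1 := by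
      rw [← E1 x0]; exact hval
    have hlin : (∑ i, b i * y i) + ((∑ i, ∑ j, G i j * (x0 i * y j))
        + (∑ i, ∑ j, G i j * (y i * x0 j))) = ∑ i, l i * y i := by
      have swap : ∑ i, ∑ j, G i j * (x0 i * y j) = ∑ i, ∑ j, G i j * (y i * x0 j) := by
        rw [Finset.sum_comm]
        refine Finset.sum_congr rfl fun i _ => Finset.sum_congr rfl fun j _ => ?_
        rw [hGs]
        ring
      rw [swap, ← two_mul]
      calc (∑ i, b i * y i) + 2 * ∑ i, ∑ j, G i j * (y i * x0 j)
          = ∑ i, (b i * y i + 2 * ∑ j, G i j * (y i * x0 j)) := by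
            rw [Finset.mul_sum, ← Finset.sum_add_distrib]
        _ = ∑ i, l i * y i := by
            refine Finset.sum_congr rfl fun i _ => ?_
            rw [hl]
            simp only []
            rw [add_mul]
            congr 1
            rw [Finset.mul_sum, Finset.mul_sum, Finset.sum_mul]
            refine Finset.sum_congr rfl fun j _ => ?_
            ring
    have hconstC : (c : ℂ) + ∑ i, ((b i * x0 i : ℝ) : ℂ)
        + ∑ i, ∑ j, ((G i j * (x0 i * x0 j) : ℝ) : ℂ) = 1 := by
      exact_mod_cast congrArg (Complex.ofReal) hconst
    have hlinC : (∑ i, ((b i * y i : ℝ) : ℂ)) + ((∑ i, ∑ j, ((G i j * (x0 i * y j) : ℝ) : ℂ))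
        + (∑ i, ∑ j, ((G i j * (y i * x0 j) : ℝ) : ℂ))) = ((∑ i, l i * y i : ℝ) : ℂ) := by
      exact_mod_cast congrArg (Complex.ofReal) hlin
    have hquadC : (∑ i, ∑ j, ((G i j * (y i * y j) : ℝ) : ℂ))
        = ((∑ i, ∑ j, G i j * (y i * y j) : ℝ) : ℂ) := by
      push_cast; ring
    calc (c:ℂ) + ∑ i, (b i : ℂ) * ((x0 i : ℂ) + t * y i)
          + ∑ i, ∑ j, (G i j : ℂ) * (((x0 i : ℂ) + t * y i) * ((x0 j : ℂ) + t * y j))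
        = (c:ℂ) + ∑ i, (((b i * x0 i : ℝ):ℂ) + t * ((b i * y i : ℝ):ℂ))
          + ∑ i, ∑ j, (((G i j * (x0 i * x0 j) : ℝ):ℂ)
            + t * (((G i j * (x0 i * y j) : ℝ):ℂ) + ((G i j * (y i * x0 j) : ℝ):ℂ))
            + t^2 * ((G i j * (y i * y j) : ℝ):ℂ)) := by
          congr 1
          · congr 1
            refine Finset.sum_congr rfl fun i _ => ?_
            push_cast; ring
          · refine Finset.sum_congr rfl fun i _ => Finset.sum_congr rfl fun j _ => ?_
            push_cast; ring
      _ = ((c:ℂ) + ∑ i, ((b i * x0 i : ℝ):ℂ) + ∑ i, ∑ j, ((G i j * (x0 i * x0 j) : ℝ):ℂ))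
          + t * ((∑ i, ((b i * y i : ℝ):ℂ)) + ((∑ i, ∑ j, ((G i j * (x0 i * y j) : ℝ):ℂ))
            + (∑ i, ∑ j, ((G i j * (y i * x0 j) : ℝ):ℂ))))
          + t^2 * (∑ i, ∑ j, ((G i j * (y i * y j) : ℝ):ℂ)) := by
          simp only [Finset.sum_add_distrib, Finset.mul_sum, mul_add]
          ring
      _ = 1 + t * ((∑ i, l i * y i : ℝ) : ℂ)
          + t^2 * ((∑ i, ∑ j, G i j * (y i * y j) : ℝ) : ℂ) := by
          rw [hconstC, hlinC, hquadC]
  -- the discriminant inequality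
  have key_ineq : ∀ y : Fin d → ℝ,
      4 * (∑ i, ∑ j, G i j * (y i * y j)) ≤ (∑ i, l i * y i)^2 := by
    intro y
    by_contra hlt
    push_neg at hlt
    set A := ∑ i, ∑ j, G i j * (y i * y j) with hA
    set L := ∑ i, l i * y i with hL
    have hApos : 0 < A := by nlinarith [sq_nonneg L]
    set s := Real.sqrt (4 * A - L^2) with hs
    have hs2 : s^2 = 4 * A - L^2 := Real.sq_sqrt (by nlinarith)
    have hs0 : 0 < s := Real.sqrt_pos.2 (by nlinarith)
    set t : ℂ := ⟨-L / (2*A), s / (2*A)⟩ with ht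
    have h2A : (2*A : ℝ) ≠ 0 := by positivity
    have h2AC : ((2*A : ℝ) : ℂ) ≠ 0 := by exact_mod_cast h2A
    have htt : ((2*A : ℝ) : ℂ) * t = ((-L : ℝ) : ℂ) + (s : ℝ) * Complex.I := by
      apply Complex.ext <;>
        simp [ht, Complex.mul_re, Complex.mul_im, Complex.ofReal_re, Complex.ofReal_im] <;>
        first
        | (field_simp; try ring)
        | ring
    have hroot : aeval (fun i => (x0 i : ℂ) + t * (y i : ℂ)) p = 0 := by
      rw [K y t, ← hL, ← hA]
      have hsC : (s:ℂ)^2 = 4*(A:ℂ) - (L:ℂ)^2 := by exact_mod_cast hs2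
      have hZ : (((2*A : ℝ):ℂ))^2 * (1 + t * (L:ℂ) + t^2 * (A:ℂ)) = 0 := by
        calc (((2*A : ℝ):ℂ))^2 * (1 + t * (L:ℂ) + t^2 * (A:ℂ))
            = (((2*A : ℝ):ℂ))^2 + (((2*A : ℝ):ℂ) * t) * ((2*A : ℝ):ℂ) * (L:ℂ)
              + (((2*A : ℝ):ℂ) * t)^2 * (A:ℂ) := by ring
          _ = (((2*A : ℝ):ℂ))^2 + (((-L : ℝ):ℂ) + (s:ℂ) * Complex.I) * ((2*A : ℝ):ℂ) * (L:ℂ)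
              + (((-L : ℝ):ℂ) + (s:ℂ) * Complex.I)^2 * (A:ℂ) := by rw [htt]
          _ = 0 := by
              push_cast
              linear_combination ((A:ℂ) * (s:ℂ)^2) * Complex.I_sq - (A:ℂ) * hsC
      have := mul_eq_zero.mp hZ
      rcases this with h | h
      · exact absurd h (pow_ne_zero _ h2AC)
      · exact h
    have him := hRZ y t hroot
    have : t.im = s / (2*A) := rfl
    rw [this] at him
    have : 0 < s / (2*A) := div_pos hs0 (by linarith)
    linarith
  -- positive semidefinite matrix
  set M : Matrix (Fin d) (Fin d) ℝ := Matrix.of fun i j => l i * l j / 4 - G i j with hM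
  have hMpsd : M.PosSemidef := by
    rw [Matrix.posSemidef_iff_dotProduct_mulVec]
    constructor
    · ext i j
      simp only [Matrix.conjTranspose_apply, hM, Matrix.of_apply, star_trivial]
      rw [hGs]
      ring
    · intro y
      have expand : dotProduct (star y) (M.mulVec y)
          = (∑ i, l i * y i)^2 / 4 - ∑ i, ∑ j, G i j * (y i * y j) := by
        simp only [dotProduct, Matrix.mulVec, star_trivial, hM, Matrix.of_apply]
        rw [show ((∑ i, l i * y i)^2 : ℝ) = (∑ i, l i * y i) * (∑ j, l j * y j) from by
          rw [pow_two], Finset.sum_mul_sum]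
        rw [Finset.sum_div, ← Finset.sum_sub_distrib]
        refine Finset.sum_congr rfl fun i _ => ?_
        rw [Finset.sum_div, ← Finset.sum_sub_distrib, Finset.mul_sum]
        refine Finset.sum_congr rfl fun j _ => ?_
        ring
      rw [expand]
      have := key_ineq y
      linarith
  obtain ⟨Bm, hBm⟩ : ∃ B : Matrix (Fin d) (Fin d) ℝ, M = Bᴴ * B :=
    CStarAlgebra.nonneg_iff_eq_star_mul_self.mp hMpsd.nonneg
  have hBment : ∀ i j, M i j = ∑ k, Bm k i * Bm k j := by
    intro i j
    rw [hBm]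
    simp [Matrix.mul_apply, Matrix.conjTranspose_apply, star_trivial]
  refine ⟨l, Bm, ?_⟩
  -- real version of K
  have realK : ∀ y : Fin d → ℝ, eval (fun i => x0 i + y i) p
      = 1 + (∑ i, l i * y i) + ∑ i, ∑ j, G i j * (y i * y j) := by
    intro y
    have castev : ((eval (fun i => x0 i + y i) p : ℝ) : ℂ)
        = aeval (fun i => (x0 i : ℂ) + 1 * (y i : ℂ)) p := by
      rw [E1, E2]
      push_cast
      simp only [one_mul, mul_add, add_mul]
      try ring_nf
    have := K y 1
    rw [← castev] at this
    have : ((eval (fun i => x0 i + y i) p : ℝ) : ℂ)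
        = ((1 + (∑ i, l i * y i) + ∑ i, ∑ j, G i j * (y i * y j) : ℝ) : ℂ) := by
      rw [this]; push_cast; ring
    exact_mod_cast this
  intro x
  have hx : x = fun i => x0 i + (x i - x0 i) := by funext i; ring
  have h1 := realK (fun i => x i - x0 i)
  rw [← hx] at h1
  rw [h1]
  have hquad : ∑ k, (∑ i, Bm k i * (x i - x0 i))^2
      = (∑ i, l i * (x i - x0 i))^2 / 4
        - ∑ i, ∑ j, G i j * ((x i - x0 i) * (x j - x0 j)) := by
    set y : Fin d → ℝ := fun i => x i - x0 i with hy
    have step1 : ∑ k, (∑ i, Bm k i * y i)^2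
        = ∑ k, ∑ i, ∑ j, (Bm k i * Bm k j) * (y i * y j) := by
      refine Finset.sum_congr rfl fun k _ => ?_
      rw [pow_two, Finset.sum_mul_sum]
      refine Finset.sum_congr rfl fun i _ => Finset.sum_congr rfl fun j _ => ?_
      ring
    rw [step1]
    have step2 : ∑ k, ∑ i, ∑ j, (Bm k i * Bm k j) * (y i * y j)
        = ∑ i, ∑ j, M i j * (y i * y j) := by
      rw [Finset.sum_comm]
      refine Finset.sum_congr rfl fun i _ => ?_
      rw [Finset.sum_comm]
      refine Finset.sum_congr rfl fun j _ => ?_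
      rw [hBment i j, Finset.sum_mul]
    rw [step2]
    simp only [hM, Matrix.of_apply]
    rw [show ((∑ i, l i * y i)^2 : ℝ) = ∑ i, ∑ j, (l i * y i) * (l j * y j) from by
      rw [pow_two, Finset.sum_mul_sum]]
    rw [Finset.sum_div, ← Finset.sum_sub_distrib]
    refine Finset.sum_congr rfl fun i _ => ?_
    rw [Finset.sum_div, ← Finset.sum_sub_distrib]
    refine Finset.sum_congr rfl fun j _ => ?_
    ring
  rw [hquad]
  ring

private lemma pencil_mul {N : Type} [Fintype N] [DecidableEq N] {m : ℕ}
    (F : Fin m → Matrix N N ℝ) (hsq : ∀ k, F k * F k = 1)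
    (hanti : ∀ k q, k ≠ q → F k * F q + F q * F k = 0)
    (a : ℝ) (w : Fin m → ℝ) :
    (a • (1 : Matrix N N ℝ) + ∑ k, w k • F k) * (a • 1 - ∑ k, w k • F k)
      = (a^2 - ∑ k, w k^2) • 1 := by
  set V : Matrix N N ℝ := ∑ k, w k • F k with hV
  have expand : V * V = ∑ k, ∑ q, (w k * w q) • (F k * F q) := by
    rw [hV, Finset.sum_mul]
    refine Finset.sum_congr rfl fun k _ => ?_
    rw [Finset.mul_sum]
    refine Finset.sum_congr rfl fun q _ => ?_
    rw [smul_mul_assoc, mul_smul_comm, smul_smul]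
  have pairs : ∀ k q, (w k * w q) • (F k * F q) + (w q * w k) • (F q * F k)
      = if k = q then (2 * w k^2) • (1 : Matrix N N ℝ) else 0 := by
    intro k q
    by_cases h : k = q
    · subst h
      rw [if_pos rfl, hsq k, ← add_smul]
      congr 1
      ring
    · rw [if_neg h]
      have hkl : F k * F q = -(F q * F k) := eq_neg_of_add_eq_zero_left (hanti k q h)
      rw [hkl, smul_neg, mul_comm (w q) (w k)]
      exact neg_add_cancel _
  have comm2 : ∑ k, ∑ q, (w k * w q) • (F k * F q)
      = ∑ k, ∑ q, (w q * w k) • (F q * F k) := Finset.sum_comm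
  have doubled : V * V + V * V = ∑ k, (2 * w k^2) • (1 : Matrix N N ℝ) := by
    calc V * V + V * V
        = (∑ k, ∑ q, (w k * w q) • (F k * F q))
          + ∑ k, ∑ q, (w q * w k) • (F q * F k) := by rw [expand, ← comm2]
      _ = ∑ k, ∑ q, ((w k * w q) • (F k * F q) + (w q * w k) • (F q * F k)) := by
          rw [← Finset.sum_add_distrib]
          exact Finset.sum_congr rfl fun k _ => Finset.sum_add_distrib.symm
      _ = ∑ k, ∑ q, if k = q then (2 * w k^2) • (1 : Matrix N N ℝ) else 0 :=
          Finset.sum_congr rfl fun k _ => Finset.sum_congr rfl fun q _ => pairs k q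
      _ = ∑ k, (2 * w k^2) • (1 : Matrix N N ℝ) := by
          refine Finset.sum_congr rfl fun k _ => ?_
          simp
  have hVV : V * V = (∑ k, w k^2) • (1 : Matrix N N ℝ) := by
    have h2 : (2:ℝ) • (V*V) = (2:ℝ) • ((∑ k, w k^2) • (1 : Matrix N N ℝ)) := by
      rw [two_smul, doubled, smul_smul, Finset.mul_sum, ← Finset.sum_smul]
    exact smul_right_injective _ (by norm_num : (2:ℝ) ≠ 0) h2
  have h1 : (a • (1:Matrix N N ℝ)) * (a • 1) = (a*a) • 1 := by
    rw [smul_mul_assoc, mul_smul_comm, smul_smul, one_mul]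
  have h2 : (a • (1:Matrix N N ℝ)) * V = a • V := by rw [smul_mul_assoc, one_mul]
  have h3 : V * (a • (1:Matrix N N ℝ)) = a • V := by rw [mul_smul_comm, mul_one]
  rw [mul_sub, add_mul, add_mul, h1, h2, h3, hVV, sub_smul, pow_two]
  abel


end Aux

open MvPolynomial in
/-- For every `RZ_{x⁰}` polynomial `p` of degree 2 with `p(x⁰) = 1` there are `r ≥ 1`
and real symmetric matrices `A_0, …, A_d` of size `n = 2r` with
`A_0 + x⁰_1 A_1 + ⋯ + x⁰_d A_d = I` and `det(A_0 + x_1 A_1 + ⋯ + x_d A_d) = p^r`. -/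
theorem stmt12 {d : ℕ} (p : MvPolynomial (Fin d) ℝ) (x0 : Fin d → ℝ)
    (hdeg : p.totalDegree = 2) (hRZ : IsRZ p x0)
    (hval : MvPolynomial.eval x0 p = 1) :
    ∃ r : ℕ, 0 < r ∧
      ∃ (A0 : Matrix (Fin (2 * r)) (Fin (2 * r)) ℝ)
        (A : Fin d → Matrix (Fin (2 * r)) (Fin (2 * r)) ℝ),
        A0.IsSymm ∧ (∀ i, (A i).IsSymm) ∧
        A0 + ∑ i, x0 i • A i = 1 ∧
        Matrix.det (Matrix.of fun k l =>
          C (A0 k l) + ∑ i, X i * C (A i k l)) = p ^ r := by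
  classical
  obtain ⟨l, Bm, hrep⟩ := sos_rep p x0 hdeg hRZ hval
  obtain ⟨N, iF, iD, hcardN, E, hEsymm, hEsq, hEanti⟩ := cliff (d+1)
  set r : ℕ := 2 ^ d with hr
  have hcard2 : Fintype.card N = 2 * r := by rw [hcardN, hr, pow_succ]; ring
  set F : Fin d → Matrix N N ℝ := fun k => E k.castSucc with hF
  set T : Matrix N N ℝ := E (Fin.last d) with hT
  have hsq' : ∀ k : Fin d, F k * F k = 1 := fun k => hEsq _
  have hanti' : ∀ k q : Fin d, k ≠ q → F k * F q + F q * F k = 0 := fun k q h =>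
    hEanti _ _ (fun hh => h (Fin.castSucc_inj.mp hh))
  have hTF : ∀ k : Fin d, T * F k = -(F k * T) := fun k =>
    eq_neg_of_add_eq_zero_left (hEanti _ _ (Fin.castSucc_lt_last k).ne')
  -- scalar affine data
  set uu : (Fin d → ℝ) → ℝ := fun x => 1 + (∑ i, l i * (x i - x0 i)) / 2 with huudef
  set vv : Fin d → (Fin d → ℝ) → ℝ := fun k x => ∑ i, Bm k i * (x i - x0 i) with hvvdef
  set a0 : ℝ := 1 - (∑ i, l i * x0 i) / 2 with ha0
  set c0 : Fin d → ℝ := fun k => -(∑ i, Bm k i * x0 i) with hc0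
  have huu : ∀ x : Fin d → ℝ, uu x = a0 + ∑ i, x i * (l i / 2) := by
    intro x
    rw [huudef]
    simp only []
    rw [show ∑ i, l i * (x i - x0 i) = (∑ i, l i * x i) - ∑ i, l i * x0 i from by
      rw [← Finset.sum_sub_distrib]; exact Finset.sum_congr rfl fun i _ => by ring]
    rw [show ∑ i, x i * (l i / 2) = (∑ i, l i * x i) / 2 from by
      rw [Finset.sum_div]; exact Finset.sum_congr rfl fun i _ => by ring]
    rw [ha0]
    ring
  have hvv : ∀ (k : Fin d) (x : Fin d → ℝ), vv k x = c0 k + ∑ i, x i * Bm k i := by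
    intro k x
    rw [hvvdef, hc0]
    simp only []
    rw [show ∑ i, Bm k i * (x i - x0 i) = (∑ i, Bm k i * x i) - ∑ i, Bm k i * x0 i from by
      rw [← Finset.sum_sub_distrib]; exact Finset.sum_congr rfl fun i _ => by ring]
    rw [show ∑ i, x i * Bm k i = ∑ i, Bm k i * x i from
      Finset.sum_congr rfl fun i _ => by ring]
    ring
  have huux0 : uu x0 = 1 := by rw [huudef]; simp
  have hvvx0 : ∀ k, vv k x0 = 0 := by intro k; rw [hvvdef]; simp
  -- matrices over N
  set A0N : Matrix N N ℝ := a0 • 1 + ∑ k, c0 k • F k with hA0N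
  set AiN : Fin d → Matrix N N ℝ := fun i => (l i / 2) • 1 + ∑ k, Bm k i • F k with hAiN
  have pencil : ∀ x : Fin d → ℝ,
      A0N + ∑ i, x i • AiN i = uu x • 1 + ∑ k, vv k x • F k := by
    intro x
    have hsum : ∑ i, x i • AiN i
        = (∑ i, x i * (l i / 2)) • (1 : Matrix N N ℝ)
          + ∑ k, (∑ i, x i * Bm k i) • F k := by
      calc ∑ i, x i • AiN i
          = ∑ i, ((x i * (l i / 2)) • (1 : Matrix N N ℝ)
              + ∑ k, (x i * Bm k i) • F k) := by
            refine Finset.sum_congr rfl fun i _ => ?_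
            rw [hAiN]
            simp only []
            rw [smul_add, smul_smul, Finset.smul_sum]
            congr 1
            exact Finset.sum_congr rfl fun k _ => by rw [smul_smul]
        _ = (∑ i, (x i * (l i / 2)) • (1 : Matrix N N ℝ))
              + ∑ i, ∑ k, (x i * Bm k i) • F k := Finset.sum_add_distrib
        _ = (∑ i, (x i * (l i / 2)) • (1 : Matrix N N ℝ))
              + ∑ k, (∑ i, x i * Bm k i) • F k := by
            rw [Finset.sum_comm]
            congr 1
            exact Finset.sum_congr rfl fun k _ => (Finset.sum_smul).symm
        _ = ((∑ i, x i * (l i / 2)) • (1 : Matrix N N ℝ))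
              + ∑ k, (∑ i, x i * Bm k i) • F k := by rw [Finset.sum_smul]
    rw [hsum, hA0N, huu x]
    rw [show ∑ k, vv k x • F k = ∑ k, (c0 k • F k + (∑ i, x i * Bm k i) • F k) from
      Finset.sum_congr rfl fun k _ => by rw [hvv k x, add_smul]]
    rw [Finset.sum_add_distrib, add_smul]
    abel
  -- determinant squared identity, real level
  have hdetsq : ∀ x : Fin d → ℝ,
      (Matrix.det (uu x • (1 : Matrix N N ℝ) + ∑ k, vv k x • F k))^2
        = (eval x p)^(Fintype.card N) := by
    intro x
    set Mx : Matrix N N ℝ := uu x • 1 + ∑ k, vv k x • F k with hMx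
    set Mx' : Matrix N N ℝ := uu x • 1 - ∑ k, vv k x • F k with hMx'
    have hmul : Mx * Mx' = ((uu x)^2 - ∑ k, (vv k x)^2) • 1 :=
      pencil_mul F hsq' hanti' _ _
    have hdetT : T.det * T.det = 1 := by rw [← Matrix.det_mul, hEsq, Matrix.det_one]
    have hdetTne : T.det ≠ 0 := by
      intro h
      rw [h, mul_zero] at hdetT
      norm_num at hdetT
    have hconj : T * Mx = Mx' * T := by
      rw [hMx, hMx', Matrix.mul_add, sub_mul]
      have e1 : T * (uu x • (1 : Matrix N N ℝ)) = (uu x • (1 : Matrix N N ℝ)) * T := by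
        rw [mul_smul_comm, smul_mul_assoc, mul_one, one_mul]
      have e2 : T * (∑ k, vv k x • F k) = -((∑ k, vv k x • F k) * T) := by
        rw [Finset.mul_sum, Finset.sum_mul, ← Finset.sum_neg_distrib]
        refine Finset.sum_congr rfl fun k _ => ?_
        rw [mul_smul_comm, hTF k, smul_neg, smul_mul_assoc]
      rw [e1, e2]
      abel
    have hdeteq : Mx.det = Mx'.det := by
      have h := congrArg Matrix.det hconj
      rw [Matrix.det_mul, Matrix.det_mul, mul_comm Mx'.det] at h
      exact mul_left_cancel₀ hdetTne h
    calc Mx.det^2 = Mx.det * Mx'.det := by rw [pow_two, hdeteq]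
      _ = (((uu x)^2 - ∑ k, (vv k x)^2) • (1 : Matrix N N ℝ)).det := by
          rw [← Matrix.det_mul, hmul]
      _ = ((uu x)^2 - ∑ k, (vv k x)^2)^(Fintype.card N) := by
          rw [Matrix.det_smul, Matrix.det_one, mul_one]
      _ = (eval x p)^(Fintype.card N) := by
          rw [hrep x, huudef, hvvdef]
  -- polynomial pencil over N
  set P : Matrix N N (MvPolynomial (Fin d) ℝ) :=
    Matrix.of (fun k l => C (A0N k l) + ∑ i, X i * C (AiN i k l)) with hP
  have hPmap : ∀ x : Fin d → ℝ, P.map (eval x) = A0N + ∑ i, x i • AiN i := by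
    intro x
    ext k l
    simp [hP, Matrix.map_apply, Matrix.of_apply, Matrix.add_apply, Matrix.sum_apply,
      Matrix.smul_apply, map_sum, smul_eq_mul]
  have hDsq : (P.det)^2 = p^(2*r) := by
    apply MvPolynomial.funext
    intro x
    calc eval x ((P.det)^2) = ((eval x) P.det)^2 := by rw [map_pow]
      _ = ((P.map (eval x)).det)^2 := by rw [RingHom.map_det, RingHom.mapMatrix_apply]
      _ = (eval x p)^(Fintype.card N) := by rw [hPmap, pencil x, hdetsq]
      _ = eval x (p^(2*r)) := by rw [map_pow, hcard2]
  have hdet1 : eval x0 P.det = 1 := by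
    have : (P.map (eval x0)) = 1 := by
      rw [hPmap, pencil x0, huux0]
      simp only [hvvx0, zero_smul, Finset.sum_const_zero, add_zero, one_smul]
    rw [RingHom.map_det, RingHom.mapMatrix_apply, this, Matrix.det_one]
  have hfinal : P.det = p ^ r := by
    have hq : p^(2*r) = (p^r)^2 := by rw [← pow_mul, mul_comm]
    have h2 : (P.det - p^r) * (P.det + p^r) = 0 := by
      linear_combination hDsq + hq
    rcases mul_eq_zero.mp h2 with h | h
    · exact sub_eq_zero.mp h
    · exfalso
      have heq := eq_neg_of_add_eq_zero_left h
      have := congrArg (eval x0) heq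
      rw [hdet1, map_neg, map_pow, hval, one_pow] at this
      norm_num at this
  -- transport to Fin (2 * r)
  have e : N ≃ Fin (2 * r) := Fintype.equivFinOfCardEq hcard2
  have hsymF : ∀ k : Fin d, (F k)ᵀ = F k := fun k => hEsymm _
  have hsymA0N : A0Nᵀ = A0N := by
    rw [hA0N, Matrix.transpose_add, Matrix.transpose_smul, Matrix.transpose_one,
      Matrix.transpose_sum]
    congr 1
    refine Finset.sum_congr rfl fun k _ => ?_
    rw [Matrix.transpose_smul, hsymF k]
  have hsymAiN : ∀ i, (AiN i)ᵀ = AiN i := by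
    intro i
    rw [hAiN]
    simp only []
    rw [Matrix.transpose_add, Matrix.transpose_smul, Matrix.transpose_one,
      Matrix.transpose_sum]
    congr 1
    refine Finset.sum_congr rfl fun k _ => ?_
    rw [Matrix.transpose_smul, hsymF k]
  have hNid : A0N + ∑ i, x0 i • AiN i = 1 := by
    rw [pencil x0, huux0]
    simp only [hvvx0, zero_smul, Finset.sum_const_zero, add_zero, one_smul]
  refine ⟨r, pow_pos (by norm_num) d, A0N.submatrix e.symm e.symm,
    fun i => (AiN i).submatrix e.symm e.symm, ?_, ?_, ?_, ?_⟩
  · show (A0N.submatrix e.symm e.symm)ᵀ = A0N.submatrix e.symm e.symm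
    rw [Matrix.transpose_submatrix, hsymA0N]
  · intro i
    show ((AiN i).submatrix e.symm e.symm)ᵀ = (AiN i).submatrix e.symm e.symm
    rw [Matrix.transpose_submatrix, hsymAiN i]
  · have : A0N.submatrix e.symm e.symm + ∑ i, x0 i • (AiN i).submatrix e.symm e.symm
        = (A0N + ∑ i, x0 i • AiN i).submatrix e.symm e.symm := by
      ext k q
      simp [Matrix.submatrix_apply, Matrix.add_apply, Matrix.sum_apply, Matrix.smul_apply]
    rw [this, hNid, Matrix.submatrix_one_equiv]
  · have hPsub : (Matrix.of fun k q =>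
        C ((A0N.submatrix e.symm e.symm) k q)
          + ∑ i, X i * C (((AiN i).submatrix e.symm e.symm) k q))
        = P.submatrix e.symm e.symm := by
      ext k q
      simp [hP, Matrix.submatrix_apply, Matrix.of_apply]
    rw [hPsub, Matrix.det_submatrix_equiv_self, hfinal]
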